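/- Let T_n be a strongly connected arc-colored tournament of order n with Δ^{-mon}(T_n) ≤ Δ^{+mon}(T_n). Then for each vertex v of T_n, the number of rainbow triangles containing v is at least δ(v)·(n − δ(v) − i(T_n))/2 − [Δ^{-mon}(T_n)·(n−1) + Δ^{+mon}(T_n)·d^+(v)]. -/

import Mathlib

open Finset

/-- A tournament on vertex type `V`: between every two distinct vertices there is
exactly one arc, and there are no loops. -/
structure Tournament (V : Type) where
  arc : V → V → Bool
  irrefl : ∀ v, arc v v = false
  oneArc : ∀ u v : V, u ≠ v → arc u v = !arc v u

namespace Tournament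

variable {V : Type} [Fintype V]

/-- Outdegree `d⁺(v)`. -/
def outDeg (T : Tournament V) (v : V) : ℕ :=
  (univ.filter fun w => T.arc v w).card

/-- Indegree `d⁻(v)`. -/
def inDeg (T : Tournament V) (v : V) : ℕ :=
  (univ.filter fun u => T.arc u v).card

/-- `δ(v) = min{d⁺(v), d⁻(v)}`. -/
def minDeg (T : Tournament V) (v : V) : ℕ :=
  min (T.outDeg v) (T.inDeg v)

/-- The irregularity `i(T)`: the maximum of `|d⁺(v) − d⁻(v)|` over all vertices. -/
def irreg (T : Tournament V) : ℕ :=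
  univ.sup fun v => ((T.outDeg v : ℤ) - (T.inDeg v : ℤ)).natAbs

/-- Strong connectivity: every vertex can reach every other vertex by a directed path. -/
def StronglyConnected (T : Tournament V) : Prop :=
  ∀ u v : V, Relation.ReflTransGen (fun a b => T.arc a b) u v

/-- The number of in-arcs of `v` with color `c`. -/
def monoInDeg (T : Tournament V) (C : V → V → ℕ) (v : V) (c : ℕ) : ℕ :=
  (univ.filter fun u => T.arc u v ∧ C u v = c).card

/-- The number of out-arcs of `v` with color `c`. -/
def monoOutDeg (T : Tournament V) (C : V → V → ℕ) (v : V) (c : ℕ) : ℕ :=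
  (univ.filter fun w => T.arc v w ∧ C v w = c).card

/-- The maximum monochromatic indegree `Δ^{-mon}(T)`. -/
def maxMonoIn (T : Tournament V) (C : V → V → ℕ) : ℕ :=
  univ.sup fun v => (univ.image fun u => C u v).sup (T.monoInDeg C v)

/-- The maximum monochromatic outdegree `Δ^{+mon}(T)`. -/
def maxMonoOut (T : Tournament V) (C : V → V → ℕ) : ℕ :=
  univ.sup fun v => (univ.image fun w => C v w).sup (T.monoOutDeg C v)

/-- The directed triangles through `v`, encoded as ordered pairs `(w, u)` with
arcs `v → w → u → v`.  This gives each triangle through `v` exactly once. -/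
def trianglesThrough (T : Tournament V) (v : V) : Finset (V × V) :=
  univ.filter fun p => T.arc v p.1 ∧ T.arc p.1 p.2 ∧ T.arc p.2 v

/-- The rainbow triangles through `v`: all three arcs have pairwise distinct colors. -/
def rainbowTrianglesThrough (T : Tournament V) (C : V → V → ℕ) (v : V) : Finset (V × V) :=
  (T.trianglesThrough v).filter fun p =>
    C v p.1 ≠ C p.1 p.2 ∧ C p.1 p.2 ≠ C p.2 v ∧ C p.2 v ≠ C v p.1

/-- The non-rainbow triangles through `v`: some two arcs share a color. -/
def nonRainbowTrianglesThrough (T : Tournament V) (C : V → V → ℕ) (v : V) : Finset (V × V) :=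
  (T.trianglesThrough v).filter fun p =>
    ¬(C v p.1 ≠ C p.1 p.2 ∧ C p.1 p.2 ≠ C p.2 v ∧ C p.2 v ≠ C v p.1)

/-- Ordered triples `(x, y, z)` with arcs `x → y → z → x`.  Each directed triangle
is counted exactly three times (once per cyclic rotation). -/
def triangleTriples (T : Tournament V) : Finset (V × V × V) :=
  univ.filter fun p => T.arc p.1 p.2.1 ∧ T.arc p.2.1 p.2.2 ∧ T.arc p.2.2 p.1

/-- Ordered triples representing rainbow triangles (each rainbow triangle thrice). -/
def rainbowTriples (T : Tournament V) (C : V → V → ℕ) : Finset (V × V × V) :=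
  T.triangleTriples.filter fun p =>
    C p.1 p.2.1 ≠ C p.2.1 p.2.2 ∧ C p.2.1 p.2.2 ≠ C p.2.2 p.1 ∧ C p.2.2 p.1 ≠ C p.1 p.2.1

/-- Ordered triples representing non-rainbow triangles (each such triangle thrice). -/
def nonRainbowTriples (T : Tournament V) (C : V → V → ℕ) : Finset (V × V × V) :=
  T.triangleTriples.filter fun p =>
    ¬(C p.1 p.2.1 ≠ C p.2.1 p.2.2 ∧ C p.2.1 p.2.2 ≠ C p.2.2 p.1 ∧ C p.2.2 p.1 ≠ C p.1 p.2.1)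

end Tournament

section Helpers

open Finset

lemma card_filter_prod_fst {α β : Type} (s : Finset α) (t : Finset β)
    (r : α → β → Prop) [∀ a b, Decidable (r a b)] :
    ((s ×ˢ t).filter fun p => r p.1 p.2).card = ∑ a ∈ s, (t.filter (r a)).card := by
  simp only [Finset.card_filter, Finset.sum_product]

lemma card_filter_prod_snd {α β : Type} (s : Finset α) (t : Finset β)
    (r : α → β → Prop) [∀ a b, Decidable (r a b)] :
    ((s ×ˢ t).filter fun p => r p.1 p.2).card = ∑ b ∈ t, (s.filter (fun a => r a b)).card := by
  simp only [Finset.card_filter, Finset.sum_product_right]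

namespace Tournament

variable {V : Type} [Fintype V] (T : Tournament V)

lemma ne_of_arc {u v : V} (h : T.arc u v) : u ≠ v := by
  rintro rfl; rw [T.irrefl] at h; exact absurd h (by simp)

lemma arc_asymm {u v : V} (h : T.arc u v) : ¬ T.arc v u := by
  intro h'
  have hne := T.ne_of_arc h
  rw [T.oneArc u v hne, h'] at h
  simp at h

lemma arc_total {u v : V} (h : u ≠ v) : T.arc u v ∨ T.arc v u := by
  rw [T.oneArc u v h]
  cases T.arc v u <;> simp

lemma deg_split (v : V) : T.outDeg v + T.inDeg v + 1 = Fintype.card V := by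
  classical
  have hdisj : Disjoint (univ.filter fun w => T.arc v w) (univ.filter fun w => T.arc w v) := by
    rw [Finset.disjoint_left]
    intro w hw hw'
    simp only [mem_filter, mem_univ, true_and] at hw hw'
    exact T.arc_asymm hw hw'
  have hunion : (univ.filter fun w => T.arc v w) ∪ (univ.filter fun w => T.arc w v)
      = univ.erase v := by
    ext w
    simp only [mem_union, mem_filter, mem_univ, true_and, mem_erase, and_true]
    constructor
    · rintro (h | h)
      · exact (T.ne_of_arc h).symm
      · exact T.ne_of_arc h
    · intro h
      rcases T.arc_total (Ne.symm h) with h' | h'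
      · exact Or.inl h'
      · exact Or.inr h'
  have := Finset.card_union_of_disjoint hdisj
  rw [hunion, Finset.card_erase_of_mem (mem_univ v), Finset.card_univ] at this
  have hpos : 0 < Fintype.card V := Fintype.card_pos_iff.mpr ⟨v⟩
  unfold outDeg inDeg
  omega

lemma natAbs_le_irreg (v : V) : ((T.outDeg v : ℤ) - T.inDeg v).natAbs ≤ T.irreg :=
  Finset.le_sup (f := fun v => ((T.outDeg v : ℤ) - (T.inDeg v : ℤ)).natAbs) (mem_univ v)

lemma le_two_outDeg (v : V) :
    (Fintype.card V : ℤ) - 1 - T.irreg ≤ 2 * T.outDeg v := by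
  have h1 := T.deg_split v
  have h2 := T.natAbs_le_irreg v
  have h3 : |(T.outDeg v : ℤ) - T.inDeg v| ≤ T.irreg := by
    rw [Int.abs_eq_natAbs]; exact_mod_cast h2
  have h4 := abs_le.mp h3
  have h5 : (T.outDeg v : ℤ) + T.inDeg v + 1 = Fintype.card V := by exact_mod_cast h1
  omega

/-- The reverse tournament. -/
def rev (T : Tournament V) : Tournament V where
  arc a b := T.arc b a
  irrefl := T.irrefl
  oneArc u v h := T.oneArc v u h.symm

lemma rev_outDeg (v : V) : (rev T).outDeg v = T.inDeg v := rfl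

lemma rev_inDeg (v : V) : (rev T).inDeg v = T.outDeg v := rfl

lemma rev_irreg : (rev T).irreg = T.irreg := by
  unfold irreg
  apply Finset.sup_congr rfl
  intro v _
  rw [rev_outDeg, rev_inDeg, ← Int.natAbs_neg]
  ring_nf

lemma rev_triangles_card (v : V) :
    ((rev T).trianglesThrough v).card = (T.trianglesThrough v).card := by
  refine Finset.card_bij' (fun p _ => p.swap) (fun p _ => p.swap) ?_ ?_
    (fun p _ => by simp) (fun p _ => by simp)
  · intro p hp
    simp only [trianglesThrough, mem_filter, mem_univ, true_and] at hp ⊢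
    simp only [rev] at hp ⊢
    exact ⟨hp.2.2, hp.2.1, hp.1⟩
  · intro p hp
    simp only [trianglesThrough, mem_filter, mem_univ, true_and] at hp ⊢
    simp only [rev] at hp ⊢
    exact ⟨hp.2.2, hp.2.1, hp.1⟩

lemma trianglesThrough_eq (v : V) :
    T.trianglesThrough v
      = ((univ.filter fun w => T.arc v w) ×ˢ univ).filter
          (fun p => T.arc p.1 p.2 ∧ T.arc p.2 v) := by
  ext p
  simp only [trianglesThrough, mem_filter, mem_univ, true_and, Finset.mem_product, and_true]

lemma outDeg_split {v w : V} (hw : T.arc v w) :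
    T.outDeg w = (univ.filter fun u => T.arc w u ∧ T.arc u v).card
      + (univ.filter fun u => T.arc w u ∧ T.arc v u).card := by
  classical
  have key : (univ.filter fun u => T.arc w u)
      = (univ.filter fun u => T.arc w u ∧ T.arc u v)
        ∪ (univ.filter fun u => T.arc w u ∧ T.arc v u) := by
    ext u
    simp only [mem_filter, mem_univ, true_and, mem_union]
    constructor
    · intro h
      have huv : u ≠ v := by
        rintro rfl
        exact T.arc_asymm hw h
      rcases T.arc_total huv with h' | h'
      · exact Or.inl ⟨h, h'⟩
      · exact Or.inr ⟨h, h'⟩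
    · rintro (⟨h, _⟩ | ⟨h, _⟩) <;> exact h
  have hdisj : Disjoint (univ.filter fun u => T.arc w u ∧ T.arc u v)
      (univ.filter fun u => T.arc w u ∧ T.arc v u) := by
    rw [Finset.disjoint_left]
    intro u hu hu'
    simp only [mem_filter, mem_univ, true_and] at hu hu'
    exact T.arc_asymm hu.2 hu'.2
  unfold outDeg
  rw [key, Finset.card_union_of_disjoint hdisj]

lemma double_count (A : Finset V) :
    2 * ((A ×ˢ A).filter fun p => T.arc p.1 p.2).card + A.card = A.card * A.card := by
  classical
  set S := (A ×ˢ A).filter fun p => T.arc p.1 p.2 with hS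
  set S' := (A ×ˢ A).filter fun p => T.arc p.2 p.1 with hS'
  have hcard : S.card = S'.card := by
    refine Finset.card_bij' (fun p _ => p.swap) (fun p _ => p.swap) ?_ ?_
      (fun p _ => by simp) (fun p _ => by simp)
    · intro p hp
      simp only [hS, hS', mem_filter, Finset.mem_product] at hp ⊢
      exact ⟨⟨hp.1.2, hp.1.1⟩, hp.2⟩
    · intro p hp
      simp only [hS, hS', mem_filter, Finset.mem_product] at hp ⊢
      exact ⟨⟨hp.1.2, hp.1.1⟩, hp.2⟩
  have hdisj : Disjoint S S' := by
    rw [Finset.disjoint_left]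
    intro p hp hp'
    simp only [hS, hS', mem_filter] at hp hp'
    exact T.arc_asymm hp.2 hp'.2
  have hunion : S ∪ S' = (A ×ˢ A).filter fun p => p.1 ≠ p.2 := by
    rw [hS, hS', ← Finset.filter_or]
    apply Finset.filter_congr
    intro p _
    constructor
    · rintro (h | h)
      · exact T.ne_of_arc h
      · exact (T.ne_of_arc h).symm
    · intro h
      exact T.arc_total h
  have hdiag : ((A ×ˢ A).filter fun p : V × V => p.1 = p.2).card = A.card := by
    refine Finset.card_bij' (fun p _ => p.1) (fun a _ => (a, a)) ?_ ?_ ?_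
      (fun a _ => rfl)
    · intro p hp
      simp only [mem_filter, Finset.mem_product] at hp
      exact hp.1.1
    · intro a ha
      simp [ha]
    · intro p hp
      simp only [mem_filter] at hp
      exact Prod.ext rfl hp.2
  have hsplit : ((A ×ˢ A).filter fun p : V × V => p.1 = p.2).card
      + ((A ×ˢ A).filter fun p : V × V => ¬ p.1 = p.2).card = (A ×ˢ A).card :=
    Finset.card_filter_add_card_filter_not _
  have hcup := Finset.card_union_of_disjoint hdisj
  rw [hunion] at hcup
  have hprod : (A ×ˢ A).card = A.card * A.card := by
    rw [Finset.card_product]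
  linarith

lemma two_triangles_ge_out (v : V) :
    (T.outDeg v : ℤ) * ((Fintype.card V : ℤ) - T.irreg - T.outDeg v)
      ≤ 2 * (T.trianglesThrough v).card := by
  set A := univ.filter fun w => T.arc v w with hA
  have hAcard : A.card = T.outDeg v := rfl
  have htri : (T.trianglesThrough v).card
      = ∑ w ∈ A, (univ.filter fun u => T.arc w u ∧ T.arc u v).card := by
    rw [T.trianglesThrough_eq v]
    exact card_filter_prod_fst A univ (fun a b => T.arc a b ∧ T.arc b v)
  have hsplit : ∀ w ∈ A, T.outDeg w
      = (univ.filter fun u => T.arc w u ∧ T.arc u v).card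
        + (univ.filter fun u => T.arc w u ∧ T.arc v u).card := by
    intro w hw
    simp only [hA, mem_filter, mem_univ, true_and] at hw
    exact T.outDeg_split hw
  have hsum : ∑ w ∈ A, T.outDeg w
      = (T.trianglesThrough v).card
        + ∑ w ∈ A, (univ.filter fun u => T.arc w u ∧ T.arc v u).card := by
    rw [htri, ← Finset.sum_add_distrib]
    exact Finset.sum_congr rfl hsplit
  have hhw : ∀ w ∈ A, (univ.filter fun u => T.arc w u ∧ T.arc v u).card
      = (A.filter fun u => T.arc w u).card := by
    intro w _
    congr 1
    ext u
    simp only [hA, mem_filter, mem_univ, true_and, Finset.filter_filter]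
    tauto
  have hS : ∑ w ∈ A, (univ.filter fun u => T.arc w u ∧ T.arc v u).card
      = ((A ×ˢ A).filter fun p => T.arc p.1 p.2).card := by
    rw [card_filter_prod_fst A A (fun a b => T.arc a b)]
    exact Finset.sum_congr rfl hhw
  have hdc := T.double_count A
  have hdeg : ∀ w ∈ A, (Fintype.card V : ℤ) - 1 - T.irreg ≤ 2 * T.outDeg w :=
    fun w _ => T.le_two_outDeg w
  have hdegsum : A.card * ((Fintype.card V : ℤ) - 1 - T.irreg)
      ≤ ∑ w ∈ A, 2 * (T.outDeg w : ℤ) := by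
    calc A.card * ((Fintype.card V : ℤ) - 1 - T.irreg)
        = ∑ _w ∈ A, ((Fintype.card V : ℤ) - 1 - T.irreg) := by
          rw [Finset.sum_const, nsmul_eq_mul]
      _ ≤ ∑ w ∈ A, 2 * (T.outDeg w : ℤ) := Finset.sum_le_sum hdeg
  have hsumZ : (∑ w ∈ A, (T.outDeg w : ℤ))
      = ((T.trianglesThrough v).card : ℤ)
        + ((A ×ˢ A).filter fun p => T.arc p.1 p.2).card := by
    have := hsum
    rw [hS] at this
    exact_mod_cast congrArg (Nat.cast : ℕ → ℤ) this
  have hdcZ : 2 * (((A ×ˢ A).filter fun p => T.arc p.1 p.2).card : ℤ) + A.card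
      = (A.card : ℤ) * A.card := by exact_mod_cast hdc
  have hsum2 : ∑ w ∈ A, 2 * (T.outDeg w : ℤ) = 2 * ∑ w ∈ A, (T.outDeg w : ℤ) := by
    rw [Finset.mul_sum]
  rw [← hAcard]
  push_cast
  nlinarith [hdegsum, hsumZ, hdcZ, hsum2]

lemma two_triangles_ge_in (v : V) :
    (T.inDeg v : ℤ) * ((Fintype.card V : ℤ) - T.irreg - T.inDeg v)
      ≤ 2 * (T.trianglesThrough v).card := by
  have h := (rev T).two_triangles_ge_out v
  rw [rev_outDeg, rev_irreg, rev_triangles_card] at h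
  exact h

lemma monoOutDeg_le (C : V → V → ℕ) (w : V) (c : ℕ) :
    T.monoOutDeg C w c ≤ T.maxMonoOut C := by
  rcases Nat.eq_zero_or_pos (T.monoOutDeg C w c) with h | h
  · omega
  · have : (univ.filter fun u => T.arc w u ∧ C w u = c).Nonempty :=
      Finset.card_pos.mp h
    obtain ⟨u, hu⟩ := this
    simp only [mem_filter, mem_univ, true_and] at hu
    have hc : c ∈ univ.image fun u => C w u :=
      Finset.mem_image.mpr ⟨u, mem_univ u, hu.2⟩
    calc T.monoOutDeg C w c ≤ (univ.image fun u => C w u).sup (T.monoOutDeg C w) :=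
          Finset.le_sup hc
      _ ≤ T.maxMonoOut C := Finset.le_sup (f := fun w =>
          (univ.image fun u => C w u).sup (T.monoOutDeg C w)) (mem_univ w)

lemma monoInDeg_le (C : V → V → ℕ) (w : V) (c : ℕ) :
    T.monoInDeg C w c ≤ T.maxMonoIn C := by
  rcases Nat.eq_zero_or_pos (T.monoInDeg C w c) with h | h
  · omega
  · have : (univ.filter fun u => T.arc u w ∧ C u w = c).Nonempty :=
      Finset.card_pos.mp h
    obtain ⟨u, hu⟩ := this
    simp only [mem_filter, mem_univ, true_and] at hu
    have hc : c ∈ univ.image fun u => C u w :=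
      Finset.mem_image.mpr ⟨u, mem_univ u, hu.2⟩
    calc T.monoInDeg C w c ≤ (univ.image fun u => C u w).sup (T.monoInDeg C w) :=
          Finset.le_sup hc
      _ ≤ T.maxMonoIn C := Finset.le_sup (f := fun w =>
          (univ.image fun u => C u w).sup (T.monoInDeg C w)) (mem_univ w)

lemma nonRainbow_le (C : V → V → ℕ) (v : V) :
    (T.nonRainbowTrianglesThrough C v).card
      ≤ T.maxMonoOut C * T.outDeg v + T.maxMonoIn C * T.outDeg v
        + T.maxMonoIn C * T.inDeg v := by
  classical
  set A := univ.filter fun w => T.arc v w with hA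
  set B := univ.filter fun w => T.arc w v with hB
  have hsub1 : (T.nonRainbowTrianglesThrough C v).card
      ≤ ((T.trianglesThrough v).filter fun p => C v p.1 = C p.1 p.2).card
        + (((T.trianglesThrough v).filter fun p => C p.2 v = C v p.1).card
          + ((T.trianglesThrough v).filter fun p => C p.1 p.2 = C p.2 v).card) := by
    have : T.nonRainbowTrianglesThrough C v
        ⊆ ((T.trianglesThrough v).filter fun p => C v p.1 = C p.1 p.2)
          ∪ (((T.trianglesThrough v).filter fun p => C p.2 v = C v p.1)
            ∪ ((T.trianglesThrough v).filter fun p => C p.1 p.2 = C p.2 v)) := by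
      intro p hp
      simp only [nonRainbowTrianglesThrough, mem_filter, mem_union] at hp ⊢
      obtain ⟨htri, hcol⟩ := hp
      push_neg at hcol
      by_cases h1 : C v p.1 = C p.1 p.2
      · exact Or.inl ⟨htri, h1⟩
      · by_cases h2 : C p.1 p.2 = C p.2 v
        · exact Or.inr (Or.inr ⟨htri, h2⟩)
        · exact Or.inr (Or.inl ⟨htri, hcol h1 h2⟩)
    calc (T.nonRainbowTrianglesThrough C v).card ≤ _ := Finset.card_le_card this
      _ ≤ _ := le_trans (Finset.card_union_le _ _)
          (by gcongr; exact Finset.card_union_le _ _)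
  have hb1 : ((T.trianglesThrough v).filter fun p => C v p.1 = C p.1 p.2).card
      ≤ T.maxMonoOut C * T.outDeg v := by
    have hsub : (T.trianglesThrough v).filter (fun p => C v p.1 = C p.1 p.2)
        ⊆ (A ×ˢ univ).filter fun p => T.arc p.1 p.2 ∧ C p.1 p.2 = C v p.1 := by
      intro p hp
      simp only [trianglesThrough, mem_filter, mem_univ, true_and,
        Finset.mem_product, and_true, hA] at hp ⊢
      exact ⟨hp.1.1, hp.1.2.1, hp.2.symm⟩
    calc ((T.trianglesThrough v).filter fun p => C v p.1 = C p.1 p.2).card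
        ≤ ((A ×ˢ univ).filter fun p => T.arc p.1 p.2 ∧ C p.1 p.2 = C v p.1).card :=
          Finset.card_le_card hsub
      _ = ∑ w ∈ A, (univ.filter fun u => T.arc w u ∧ C w u = C v w).card :=
          card_filter_prod_fst A univ (fun a b => T.arc a b ∧ C a b = C v a)
      _ = ∑ w ∈ A, T.monoOutDeg C w (C v w) := rfl
      _ ≤ ∑ _w ∈ A, T.maxMonoOut C :=
          Finset.sum_le_sum fun w _ => T.monoOutDeg_le C w (C v w)
      _ = T.outDeg v * T.maxMonoOut C := by
          rw [Finset.sum_const, smul_eq_mul]; rfl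
      _ = T.maxMonoOut C * T.outDeg v := Nat.mul_comm _ _
  have hb2 : ((T.trianglesThrough v).filter fun p => C p.2 v = C v p.1).card
      ≤ T.maxMonoIn C * T.outDeg v := by
    have hsub : (T.trianglesThrough v).filter (fun p => C p.2 v = C v p.1)
        ⊆ (A ×ˢ univ).filter fun p => T.arc p.2 v ∧ C p.2 v = C v p.1 := by
      intro p hp
      simp only [trianglesThrough, mem_filter, mem_univ, true_and,
        Finset.mem_product, and_true, hA] at hp ⊢
      exact ⟨hp.1.1, hp.1.2.2, hp.2⟩
    calc ((T.trianglesThrough v).filter fun p => C p.2 v = C v p.1).card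
        ≤ ((A ×ˢ univ).filter fun p => T.arc p.2 v ∧ C p.2 v = C v p.1).card :=
          Finset.card_le_card hsub
      _ = ∑ w ∈ A, (univ.filter fun u => T.arc u v ∧ C u v = C v w).card :=
          card_filter_prod_fst A univ (fun a b => T.arc b v ∧ C b v = C v a)
      _ = ∑ w ∈ A, T.monoInDeg C v (C v w) := rfl
      _ ≤ ∑ _w ∈ A, T.maxMonoIn C :=
          Finset.sum_le_sum fun w _ => T.monoInDeg_le C v (C v w)
      _ = T.outDeg v * T.maxMonoIn C := by
          rw [Finset.sum_const, smul_eq_mul]; rfl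
      _ = T.maxMonoIn C * T.outDeg v := Nat.mul_comm _ _
  have hb3 : ((T.trianglesThrough v).filter fun p => C p.1 p.2 = C p.2 v).card
      ≤ T.maxMonoIn C * T.inDeg v := by
    have hsub : (T.trianglesThrough v).filter (fun p => C p.1 p.2 = C p.2 v)
        ⊆ (univ ×ˢ B).filter fun p => T.arc p.1 p.2 ∧ C p.1 p.2 = C p.2 v := by
      intro p hp
      simp only [trianglesThrough, mem_filter, mem_univ, true_and,
        Finset.mem_product, true_and, hB] at hp ⊢
      exact ⟨hp.1.2.2, hp.1.2.1, hp.2⟩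
    calc ((T.trianglesThrough v).filter fun p => C p.1 p.2 = C p.2 v).card
        ≤ ((univ ×ˢ B).filter fun p => T.arc p.1 p.2 ∧ C p.1 p.2 = C p.2 v).card :=
          Finset.card_le_card hsub
      _ = ∑ u ∈ B, (univ.filter fun w => T.arc w u ∧ C w u = C u v).card :=
          card_filter_prod_snd univ B (fun a b => T.arc a b ∧ C a b = C b v)
      _ = ∑ u ∈ B, T.monoInDeg C u (C u v) := rfl
      _ ≤ ∑ _u ∈ B, T.maxMonoIn C :=
          Finset.sum_le_sum fun u _ => T.monoInDeg_le C u (C u v)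
      _ = T.inDeg v * T.maxMonoIn C := by
          rw [Finset.sum_const, smul_eq_mul]; rfl
      _ = T.maxMonoIn C * T.inDeg v := Nat.mul_comm _ _
  linarith [hsub1, hb1, hb2, hb3]

end Tournament

end Helpers

/-- In a strongly connected arc-colored tournament of order `n` with
`Δ^{-mon} ≤ Δ^{+mon}`, every vertex `v` lies on at least
`δ(v)(n − δ(v) − i(T))/2 − [Δ^{-mon}(n−1) + Δ^{+mon} d⁺(v)]` rainbow triangles. -/
theorem rainbow_triangles_through_vertex_lower_bound
    {V : Type} [Fintype V] (n : ℕ) (hn : Fintype.card V = n)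
    (T : Tournament V) (C : V → V → ℕ)
    (hsc : T.StronglyConnected)
    (hmono : T.maxMonoIn C ≤ T.maxMonoOut C)
    (v : V) :
    ((T.rainbowTrianglesThrough C v).card : ℚ) ≥
      (T.minDeg v : ℚ) * ((n : ℚ) - (T.minDeg v : ℚ) - (T.irreg : ℚ)) / 2
        - ((T.maxMonoIn C : ℚ) * ((n : ℚ) - 1)
            + (T.maxMonoOut C : ℚ) * (T.outDeg v : ℚ)) := by
  have hpart : (T.rainbowTrianglesThrough C v).card
      + (T.nonRainbowTrianglesThrough C v).card = (T.trianglesThrough v).card :=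
    Finset.card_filter_add_card_filter_not _
  have hdeg : T.outDeg v + T.inDeg v + 1 = n := by rw [← hn]; exact T.deg_split v
  -- triangle lower bound
  have h2t : (T.minDeg v : ℚ) * ((n : ℚ) - (T.minDeg v : ℚ) - (T.irreg : ℚ))
      ≤ 2 * ((T.trianglesThrough v).card : ℚ) := by
    rcases le_total (T.outDeg v) (T.inDeg v) with h | h
    · have hmin : T.minDeg v = T.outDeg v := min_eq_left h
      have := T.two_triangles_ge_out v
      rw [hn] at this
      rw [hmin]
      have := (by exact_mod_cast this :
        (T.outDeg v : ℚ) * ((n : ℚ) - (T.irreg : ℚ) - (T.outDeg v : ℚ))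
          ≤ 2 * ((T.trianglesThrough v).card : ℚ))
      linarith [this, sq_nonneg ((T.outDeg v : ℚ))]
    · have hmin : T.minDeg v = T.inDeg v := min_eq_right h
      have := T.two_triangles_ge_in v
      rw [hn] at this
      rw [hmin]
      have := (by exact_mod_cast this :
        (T.inDeg v : ℚ) * ((n : ℚ) - (T.irreg : ℚ) - (T.inDeg v : ℚ))
          ≤ 2 * ((T.trianglesThrough v).card : ℚ))
      linarith [this]
  -- non-rainbow upper bound
  have hnr : ((T.nonRainbowTrianglesThrough C v).card : ℚ)
      ≤ (T.maxMonoIn C : ℚ) * ((n : ℚ) - 1) + (T.maxMonoOut C : ℚ) * (T.outDeg v : ℚ) := by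
    have h1 := T.nonRainbow_le C v
    have h1' : ((T.nonRainbowTrianglesThrough C v).card : ℚ)
        ≤ (T.maxMonoOut C : ℚ) * (T.outDeg v : ℚ)
          + (T.maxMonoIn C : ℚ) * (T.outDeg v : ℚ)
          + (T.maxMonoIn C : ℚ) * (T.inDeg v : ℚ) := by exact_mod_cast h1
    have hdeg' : (T.outDeg v : ℚ) + (T.inDeg v : ℚ) + 1 = (n : ℚ) := by exact_mod_cast hdeg
    nlinarith [h1', hdeg']
  have hpart' : ((T.rainbowTrianglesThrough C v).card : ℚ)
      + ((T.nonRainbowTrianglesThrough C v).card : ℚ)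
      = ((T.trianglesThrough v).card : ℚ) := by exact_mod_cast hpart
  rw [ge_iff_le]
  linarith [h2t, hnr, hpart']
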